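/- Let y₁,…,yₙ be pairwise distinct points in ℝᵈ, let Wᵢ(h) = {x ∈ ℝᵈ : ⟨x, yᵢ⟩ + hᵢ ≥ ⟨x, yⱼ⟩ + hⱼ for all j}, and let μ be a finite Borel measure on ℝᵈ absolutely continuous with respect to Lebesgue measure. Then for each i, the μ-volume function h ↦ wᵢ(h) := μ(Wᵢ(h)) is continuous on ℝⁿ. -/

import Mathlib

open RealInnerProductSpace MeasureTheory

/-- A hyperplane `{x | ⟪x, v⟫ = c}` with `v ≠ 0` is Lebesgue-null. -/
lemma hyperplane_null {d : ℕ} (v : EuclideanSpace ℝ (Fin d)) (hv : v ≠ 0) (c : ℝ) :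
    volume {x : EuclideanSpace ℝ (Fin d) | ⟪x, v⟫ = c} = 0 := by
  set f : EuclideanSpace ℝ (Fin d) →ₗ[ℝ] ℝ := innerSL ℝ v |>.toLinearMap
  have hker : LinearMap.ker f ≠ ⊤ := by
    intro h
    have : f v = 0 := by
      have : v ∈ LinearMap.ker f := by rw [h]; trivial
      simpa using this
    simp only [f, ContinuousLinearMap.coe_coe, innerSL_apply_apply] at this
    exact hv (inner_self_eq_zero.mp this)
  set x₀ : EuclideanSpace ℝ (Fin d) := (c / ‖v‖ ^ 2) • v
  have hx₀ : ⟪x₀, v⟫ = c := by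
    have hvn : ‖v‖ ≠ 0 := norm_ne_zero_iff.mpr hv
    simp only [x₀, real_inner_smul_left, real_inner_self_eq_norm_sq]
    field_simp
  have hset : {x : EuclideanSpace ℝ (Fin d) | ⟪x, v⟫ = c}
      = (fun x => x + x₀) '' (LinearMap.ker f : Set (EuclideanSpace ℝ (Fin d))) := by
    ext x
    simp only [Set.mem_setOf_eq, Set.mem_image, SetLike.mem_coe, LinearMap.mem_ker]
    constructor
    · intro hx
      refine ⟨x - x₀, ?_, by abel⟩
      simp only [f, ContinuousLinearMap.coe_coe, innerSL_apply_apply, inner_sub_right]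
      rw [real_inner_comm x v, real_inner_comm x₀ v, hx, hx₀, sub_self]
    · rintro ⟨z, hz, rfl⟩
      simp only [f, ContinuousLinearMap.coe_coe, innerSL_apply_apply] at hz
      rw [inner_add_left, real_inner_comm v z, hz, hx₀, zero_add]
  rw [hset, Set.image_add_right, measure_preimage_add_right]
  exact Measure.addHaar_submodule volume (LinearMap.ker f) hker

/-- for pairwise distinct `y₁,…,yₙ` and a finite measure `μ` absolutely
continuous w.r.t. Lebesgue measure, the μ-volume of the `i`-th cell
`h ↦ wᵢ(h) = μ(Wᵢ(h))` is a continuous function of the height vector `h ∈ ℝⁿ`. -/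
theorem cell_measure_continuous {d n : ℕ}
    (y : Fin n → EuclideanSpace ℝ (Fin d)) (hy : Function.Injective y)
    (μ : Measure (EuclideanSpace ℝ (Fin d))) [IsFiniteMeasure μ]
    (hac : μ ≪ volume) (i : Fin n) :
    Continuous fun h : EuclideanSpace ℝ (Fin n) =>
      μ {x : EuclideanSpace ℝ (Fin d) | ∀ j, ⟪x, y j⟫ + h j ≤ ⟪x, y i⟫ + h i} := by
  set S : EuclideanSpace ℝ (Fin n) → Set (EuclideanSpace ℝ (Fin d)) :=
    fun h => {x | ∀ j, ⟪x, y j⟫ + h j ≤ ⟪x, y i⟫ + h i} with hS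
  have hmeas : ∀ h, MeasurableSet (S h) := by
    intro h
    have : S h = ⋂ j, {x | ⟪x, y j⟫ + h j ≤ ⟪x, y i⟫ + h i} := by
      ext x; simp [hS, Set.mem_iInter]
    rw [this]
    refine MeasurableSet.iInter fun j => ?_
    exact (isClosed_le ((continuous_id.inner continuous_const).add continuous_const)
      ((continuous_id.inner continuous_const).add continuous_const)).measurableSet
  rw [continuous_iff_continuousAt]
  intro h₀
  -- the exceptional null set
  have hnull : μ {x : EuclideanSpace ℝ (Fin d) |
      ∃ j, j ≠ i ∧ ⟪x, y j - y i⟫ = h₀ i - h₀ j} = 0 := by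
    apply hac
    have : {x : EuclideanSpace ℝ (Fin d) | ∃ j, j ≠ i ∧ ⟪x, y j - y i⟫ = h₀ i - h₀ j}
        = ⋃ j ∈ {j | j ≠ i}, {x : EuclideanSpace ℝ (Fin d) | ⟪x, y j - y i⟫ = h₀ i - h₀ j} := by
      ext x; simp
    rw [this]
    refine measure_biUnion_null_iff (Set.to_countable _) |>.mpr fun j hj => ?_
    exact hyperplane_null _ (sub_ne_zero.mpr fun e => hj (hy e)) _
  -- rewrite measures as lintegrals of indicators
  have hrw : ∀ h, μ (S h) = ∫⁻ x, (S h).indicator 1 x ∂μ := by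
    intro h
    rw [lintegral_indicator_one (hmeas h)]
  unfold ContinuousAt
  simp only [← hS]
  rw [show (fun h => μ (S h)) = fun h => ∫⁻ x, (S h).indicator 1 x ∂μ
      from funext hrw, hrw h₀]
  apply tendsto_lintegral_filter_of_dominated_convergence (fun _ => (1 : ENNReal))
  · exact Filter.Eventually.of_forall fun h => (measurable_one.indicator (hmeas h))
  · refine Filter.Eventually.of_forall fun h => Filter.Eventually.of_forall fun x => ?_
    by_cases hx : x ∈ S h <;> simp [hx]
  · simp [measure_ne_top μ Set.univ]
  · -- a.e. pointwise convergence
    rw [MeasureTheory.ae_iff]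
    apply measure_mono_null _ hnull
    intro x hx
    simp only [Set.mem_setOf_eq, Set.mem_compl_iff, not_not] at hx ⊢
    by_contra hcon
    push_neg at hcon
    apply hx
    -- x is not on any hyperplane; show indicator eventually constant
    have hev : ∀ᶠ h in nhds h₀, (x ∈ S h ↔ x ∈ S h₀) := by
      have : ∀ᶠ h in nhds h₀, ∀ j, (⟪x, y j⟫ + h j ≤ ⟪x, y i⟫ + h i
          ↔ ⟪x, y j⟫ + h₀ j ≤ ⟪x, y i⟫ + h₀ i) := by
        rw [Filter.eventually_all]
        intro j
        by_cases hji : j = i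
        · subst hji; simp
        · have hne : ⟪x, y j - y i⟫ ≠ h₀ i - h₀ j := fun e => hcon j hji e
          have hne' : (⟪x, y i⟫ + h₀ i) - (⟪x, y j⟫ + h₀ j) ≠ 0 := by
            intro e
            apply hne
            rw [inner_sub_right]
            linarith
          have hcont : Continuous fun h : EuclideanSpace ℝ (Fin n) =>
              (⟪x, y i⟫ + h i) - (⟪x, y j⟫ + h j) := by
            have hi : Continuous fun h : EuclideanSpace ℝ (Fin n) => h i :=
              (continuous_apply i).comp (PiLp.continuous_ofLp 2 _)
            have hj' : Continuous fun h : EuclideanSpace ℝ (Fin n) => h j :=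
              (continuous_apply j).comp (PiLp.continuous_ofLp 2 _)
            exact (continuous_const.add hi).sub (continuous_const.add hj')
          rcases lt_or_gt_of_ne hne' with hlt | hgt
          · have : ∀ᶠ h in nhds h₀, (⟪x, y i⟫ + h i) - (⟪x, y j⟫ + h j) < 0 :=
              hcont.continuousAt.eventually_lt continuousAt_const hlt
            filter_upwards [this] with h hh
            constructor
            · intro h1; linarith
            · intro h1; linarith
          · have : ∀ᶠ h in nhds h₀, (0:ℝ) < (⟪x, y i⟫ + h i) - (⟪x, y j⟫ + h j) :=
              continuousAt_const.eventually_lt hcont.continuousAt hgt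
            filter_upwards [this] with h hh
            constructor
            · intro _; linarith
            · intro _; linarith
      filter_upwards [this] with h hh
      simp only [hS, Set.mem_setOf_eq]
      exact ⟨fun H j => (hh j).mp (H j), fun H j => (hh j).mpr (H j)⟩
    have : ∀ᶠ h in nhds h₀, (S h).indicator (1 : EuclideanSpace ℝ (Fin d) → ENNReal) x
        = (S h₀).indicator (1 : EuclideanSpace ℝ (Fin d) → ENNReal) x := by
      filter_upwards [hev] with h hh
      by_cases hx0 : x ∈ S h₀
      · rw [Set.indicator_of_mem (hh.mpr hx0), Set.indicator_of_mem hx0]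
      · rw [Set.indicator_of_notMem (fun m => hx0 (hh.mp m)),
          Set.indicator_of_notMem hx0]
    exact (tendsto_const_nhds.congr' (by filter_upwards [this] with h hh; exact hh.symm))
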